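/- arXiv:1312.3518 — 2 statements merged into one kernel-verified Lean document; each statement's English description precedes it below -/
import Mathlib

section
/- Let f : ℝ² → ℝ² be a bounded homeomorphism, i.e., sup_{x ∈ ℝ²} |f(x) − x| < ∞, and let φ : ℝ² → int D², φ(x) = x/(1 + |x|), be the radial identification of ℝ² with the open unit disk. Then φ ∘ f ∘ φ⁻¹ : int D² → int D² extends to a homeomorphism G : D² → D² with G equal to the identity on ∂D². -/
noncomputable def radialMap (x : EuclideanSpace ℝ (Fin 2)) : EuclideanSpace ℝ (Fin 2) :=
  (1 + ‖x‖)⁻¹ • x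

noncomputable def invRadial (y : EuclideanSpace ℝ (Fin 2)) : EuclideanSpace ℝ (Fin 2) :=
  (1 - ‖y‖)⁻¹ • y

lemma norm_radialMap (x : EuclideanSpace ℝ (Fin 2)) : ‖radialMap x‖ = ‖x‖ / (1 + ‖x‖) := by
  have h : (0:ℝ) < 1 + ‖x‖ := by positivity
  rw [radialMap, norm_smul, Real.norm_eq_abs, abs_inv, abs_of_pos h]
  ring

lemma norm_radialMap_lt_one (x : EuclideanSpace ℝ (Fin 2)) : ‖radialMap x‖ < 1 := by
  rw [norm_radialMap]
  have h : (0:ℝ) < 1 + ‖x‖ := by positivity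
  rw [div_lt_one h]; linarith

lemma invRadial_radialMap (x : EuclideanSpace ℝ (Fin 2)) : invRadial (radialMap x) = x := by
  have h : (0:ℝ) < 1 + ‖x‖ := by positivity
  rw [invRadial, norm_radialMap, radialMap, smul_smul]
  have h1 : 1 - ‖x‖ / (1 + ‖x‖) = (1 + ‖x‖)⁻¹ := by field_simp; ring
  rw [h1, inv_inv, mul_inv_cancel₀ (ne_of_gt h), one_smul]

lemma norm_invRadial {y : EuclideanSpace ℝ (Fin 2)} (hy : ‖y‖ < 1) :
    ‖invRadial y‖ = ‖y‖ / (1 - ‖y‖) := by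
  have h : (0:ℝ) < 1 - ‖y‖ := by linarith
  rw [invRadial, norm_smul, Real.norm_eq_abs, abs_inv, abs_of_pos h]; ring

lemma radialMap_invRadial {y : EuclideanSpace ℝ (Fin 2)} (hy : ‖y‖ < 1) :
    radialMap (invRadial y) = y := by
  have h : (0:ℝ) < 1 - ‖y‖ := by linarith
  rw [radialMap, norm_invRadial hy, invRadial, smul_smul]
  have h1 : 1 + ‖y‖ / (1 - ‖y‖) = (1 - ‖y‖)⁻¹ := by field_simp; ring
  rw [h1, inv_inv, mul_inv_cancel₀ (ne_of_gt h), one_smul]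

lemma radialMap_sub_le (a b : EuclideanSpace ℝ (Fin 2)) :
    ‖radialMap a - radialMap b‖ ≤ 2 * ‖a - b‖ / (1 + ‖b‖) := by
  have hpa : (0:ℝ) < 1 + ‖a‖ := by positivity
  have hpb : (0:ℝ) < 1 + ‖b‖ := by positivity
  have key : radialMap a - radialMap b =
      (1 + ‖b‖)⁻¹ • (a - b) + ((1 + ‖a‖)⁻¹ - (1 + ‖b‖)⁻¹) • a := by
    rw [radialMap, radialMap]; module
  rw [key]
  refine (norm_add_le _ _).trans ?_
  rw [norm_smul, norm_smul, Real.norm_eq_abs, Real.norm_eq_abs, abs_inv,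
    abs_of_pos hpb]
  have h3 : |(1 + ‖a‖)⁻¹ - (1 + ‖b‖)⁻¹| ≤ ‖a - b‖ / ((1 + ‖a‖) * (1 + ‖b‖)) := by
    have he : (1 + ‖a‖)⁻¹ - (1 + ‖b‖)⁻¹ = (‖b‖ - ‖a‖) / ((1 + ‖a‖) * (1 + ‖b‖)) := by
      field_simp
      try ring
    rw [he, abs_div, abs_of_pos (by positivity : (0:ℝ) < (1 + ‖a‖) * (1 + ‖b‖))]
    gcongr
    exact (abs_norm_sub_norm_le b a).trans_eq (norm_sub_rev b a)
  have h4 : |(1 + ‖a‖)⁻¹ - (1 + ‖b‖)⁻¹| * ‖a‖ ≤ ‖a - b‖ / (1 + ‖b‖) := by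
    calc |(1 + ‖a‖)⁻¹ - (1 + ‖b‖)⁻¹| * ‖a‖
        ≤ (‖a - b‖ / ((1 + ‖a‖) * (1 + ‖b‖))) * (1 + ‖a‖) := by
          apply mul_le_mul h3 (by linarith) (norm_nonneg a) (by positivity)
      _ = ‖a - b‖ / (1 + ‖b‖) := by field_simp
  have h5 : (1 + ‖b‖)⁻¹ * ‖a - b‖ = ‖a - b‖ / (1 + ‖b‖) := by
    rw [inv_mul_eq_div]
  rw [h5]
  have : 2 * ‖a - b‖ / (1 + ‖b‖) = ‖a - b‖ / (1 + ‖b‖) + ‖a - b‖ / (1 + ‖b‖) := by ring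
  linarith

noncomputable def diskExt (f : EuclideanSpace ℝ (Fin 2) → EuclideanSpace ℝ (Fin 2))
    (y : EuclideanSpace ℝ (Fin 2)) : EuclideanSpace ℝ (Fin 2) :=
  if ‖y‖ < 1 then radialMap (f (invRadial y)) else y

lemma diskExt_norm_le (f : EuclideanSpace ℝ (Fin 2) → EuclideanSpace ℝ (Fin 2))
    {y : EuclideanSpace ℝ (Fin 2)} (hy : ‖y‖ ≤ 1) : ‖diskExt f y‖ ≤ 1 := by
  rw [diskExt]
  split
  · exact (norm_radialMap_lt_one _).le
  · exact hy

lemma diskExt_estimate {f : EuclideanSpace ℝ (Fin 2) → EuclideanSpace ℝ (Fin 2)} {C : ℝ}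
    (hf : ∀ x, ‖f x - x‖ ≤ C) {y : EuclideanSpace ℝ (Fin 2)} (hy : ‖y‖ ≤ 1) :
    ‖diskExt f y - y‖ ≤ 2 * C * (1 - ‖y‖) := by
  rw [diskExt]
  split
  · rename_i h
    have h1 : (0:ℝ) < 1 - ‖y‖ := by linarith
    set x := invRadial y with hx
    have hxy : radialMap x = y := radialMap_invRadial h
    calc ‖radialMap (f x) - y‖ = ‖radialMap (f x) - radialMap x‖ := by rw [hxy]
      _ ≤ 2 * ‖f x - x‖ / (1 + ‖x‖) := radialMap_sub_le _ _
      _ ≤ 2 * C / (1 + ‖x‖) := by gcongr; exact hf x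
      _ = 2 * C * (1 - ‖y‖) := by
          rw [norm_invRadial h]
          have : 1 + ‖y‖ / (1 - ‖y‖) = (1 - ‖y‖)⁻¹ := by field_simp; ring
          rw [this, div_eq_mul_inv, inv_inv]
  · rename_i h
    have : ‖y‖ = 1 := le_antisymm hy (not_lt.mp h)
    have hC : 0 ≤ C := (norm_nonneg _).trans (hf 0)
    simp [this]

lemma diskExt_comp {f g : EuclideanSpace ℝ (Fin 2) → EuclideanSpace ℝ (Fin 2)}
    (hgf : ∀ x, g (f x) = x) {y : EuclideanSpace ℝ (Fin 2)} (hy : ‖y‖ ≤ 1) :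
    diskExt g (diskExt f y) = y := by
  by_cases h : ‖y‖ < 1
  · have h1 : diskExt f y = radialMap (f (invRadial y)) := by rw [diskExt, if_pos h]
    rw [h1, diskExt, if_pos (norm_radialMap_lt_one _), invRadial_radialMap,
      hgf, radialMap_invRadial h]
  · have h1 : diskExt f y = y := by rw [diskExt, if_neg h]
    rw [h1, diskExt, if_neg h]

lemma diskExt_continuousOn {f : EuclideanSpace ℝ (Fin 2) → EuclideanSpace ℝ (Fin 2)} {C : ℝ}
    (hfc : Continuous f) (hf : ∀ x, ‖f x - x‖ ≤ C) :
    ContinuousOn (diskExt f) (Metric.closedBall 0 1) := by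
  have hC : 0 ≤ C := (norm_nonneg _).trans (hf 0)
  intro y hy
  rw [Metric.mem_closedBall, dist_zero_right] at hy
  rcases lt_or_eq_of_le hy with h | h
  · apply ContinuousAt.continuousWithinAt
    have hopen : IsOpen {z : EuclideanSpace ℝ (Fin 2) | ‖z‖ < 1} := by
      have : {z : EuclideanSpace ℝ (Fin 2) | ‖z‖ < 1} = Metric.ball 0 1 := by
        ext z; simp [Metric.mem_ball, dist_zero_right]
      rw [this]; exact Metric.isOpen_ball
    have heq : diskExt f =ᶠ[nhds y] (fun z => radialMap (f (invRadial z))) := by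
      filter_upwards [hopen.mem_nhds h] with z hz
      rw [diskExt, if_pos hz]
    refine ContinuousAt.congr ?_ heq.symm
    have hcr : Continuous radialMap := by
      show Continuous (fun x => (1 + ‖x‖)⁻¹ • x)
      refine Continuous.smul (f := fun x => (1 + ‖x‖)⁻¹) ?_ continuous_id
      exact (continuous_const.add continuous_norm).inv₀ (fun x => (show (0:ℝ) < 1 + ‖x‖ by positivity).ne')
    have hci : ContinuousAt invRadial y := by
      show ContinuousAt (fun z => (1 - ‖z‖)⁻¹ • z) y
      refine ContinuousAt.smul (f := fun z => (1 - ‖z‖)⁻¹) ?_ continuousAt_id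
      apply ContinuousAt.inv₀ (continuous_const.sub continuous_norm).continuousAt
      intro hcon
      rw [Pi.sub_apply, sub_eq_zero] at hcon
      exact absurd hcon.symm (ne_of_lt h)
    exact hcr.continuousAt.comp (hfc.continuousAt.comp hci)
  · rw [Metric.continuousWithinAt_iff]
    intro ε hε
    refine ⟨ε / (2 * C + 1), by positivity, fun z hz hdz => ?_⟩
    rw [Metric.mem_closedBall, dist_zero_right] at hz
    have hgy : diskExt f y = y := by
      rw [diskExt, if_neg (by rw [← h]; exact lt_irrefl _)]
    rw [hgy, dist_eq_norm]
    have e1 : ‖diskExt f z - z‖ ≤ 2 * C * (1 - ‖z‖) := diskExt_estimate hf hz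
    have e2 : 1 - ‖z‖ ≤ ‖z - y‖ := by
      have h2 := abs_le.mp (abs_norm_sub_norm_le z y)
      linarith [h2.1, h2.2]
    have e3 : ‖diskExt f z - y‖ ≤ ‖diskExt f z - z‖ + ‖z - y‖ := norm_sub_le_norm_sub_add_norm_sub _ _ _
    have e4 : ‖z - y‖ = dist z y := (dist_eq_norm z y).symm
    have : ‖diskExt f z - y‖ ≤ (2 * C + 1) * dist z y := by
      rw [← e4]
      nlinarith [dist_nonneg (x := z) (y := y)]
    calc ‖diskExt f z - y‖ ≤ (2 * C + 1) * dist z y := this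
      _ < (2 * C + 1) * (ε / (2 * C + 1)) := by
          apply mul_lt_mul_of_pos_left hdz (by positivity)
      _ = ε := by field_simp

/-- Let `f : ℝ² → ℝ²` be a bounded homeomorphism (`‖f x − x‖ ≤ C` for all `x`) and let
`φ(x) = x/(1 + |x|)` be the radial identification of `ℝ²` with the interior of the unit disk
`D²`.  Then `φ ∘ f ∘ φ⁻¹ : int D² → int D²` extends to a homeomorphism `G : D² → D²` which is
the identity on `∂D²` (i.e. `G` agrees with `φ ∘ f ∘ φ⁻¹` at every point of the form `φ x`,
and fixes every point of norm one). -/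
theorem bounded_homeomorph_extends_to_closed_disk
    (f : EuclideanSpace ℝ (Fin 2) ≃ₜ EuclideanSpace ℝ (Fin 2))
    (C : ℝ) (hf : ∀ x : EuclideanSpace ℝ (Fin 2), ‖f x - x‖ ≤ C) :
    ∃ G : (Metric.closedBall (0 : EuclideanSpace ℝ (Fin 2)) 1) ≃ₜ
        (Metric.closedBall (0 : EuclideanSpace ℝ (Fin 2)) 1),
      (∀ y : Metric.closedBall (0 : EuclideanSpace ℝ (Fin 2)) 1,
        ‖(y : EuclideanSpace ℝ (Fin 2))‖ = 1 → G y = y) ∧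
      (∀ (y : Metric.closedBall (0 : EuclideanSpace ℝ (Fin 2)) 1)
        (x : EuclideanSpace ℝ (Fin 2)),
        (y : EuclideanSpace ℝ (Fin 2)) = radialMap x →
          (G y : EuclideanSpace ℝ (Fin 2)) = radialMap (f x)) := by
  have hf' : ∀ y, ‖f.symm y - y‖ ≤ C := by
    intro y
    have : ‖f.symm y - y‖ = ‖f (f.symm y) - f.symm y‖ := by
      rw [Homeomorph.apply_symm_apply, norm_sub_rev]
    rw [this]; exact hf _
  have memb : ∀ {y : EuclideanSpace ℝ (Fin 2)}, y ∈ Metric.closedBall (0:EuclideanSpace ℝ (Fin 2)) 1 ↔ ‖y‖ ≤ 1 := by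
    intro y; rw [Metric.mem_closedBall, dist_zero_right]
  refine ⟨{
    toFun := fun y => ⟨diskExt f y, memb.mpr (diskExt_norm_le f (memb.mp y.2))⟩
    invFun := fun y => ⟨diskExt f.symm y, memb.mpr (diskExt_norm_le f.symm (memb.mp y.2))⟩
    left_inv := fun y => Subtype.ext
      (diskExt_comp (fun x => f.symm_apply_apply x) (memb.mp y.2))
    right_inv := fun y => Subtype.ext
      (diskExt_comp (fun x => f.apply_symm_apply x) (memb.mp y.2))
    continuous_toFun :=
      ((diskExt_continuousOn f.continuous hf).restrict).subtype_mk _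
    continuous_invFun :=
      ((diskExt_continuousOn f.symm.continuous hf').restrict).subtype_mk _
  }, ?_, ?_⟩
  · intro y h1
    apply Subtype.ext
    show diskExt f y = y
    rw [diskExt, if_neg (by rw [h1]; exact lt_irrefl _)]
  · intro y x hyx
    show diskExt f y = radialMap (f x)
    rw [hyx, diskExt, if_pos (norm_radialMap_lt_one x), invRadial_radialMap]
end

section
/- (Alexander trick) Every homeomorphism G : D² → D² that restricts to the identity on ∂D² is isotopic to the identity through homeomorphisms that fix ∂D² pointwise: there is a continuous family of homeomorphisms G_t : D² → D², t ∈ [0,1], each equal to the identity on ∂D², with G_0 = id and G_1 = G. Explicitly, one may take G_t(x) = t·G(x/t) for |x| < t and G_t(x) = x for |x| ≥ t. -/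
open Metric Set Filter Topology

namespace AlexTrick

abbrev E2 := EuclideanSpace ℝ (Fin 2)
abbrev Disk : Set E2 := Metric.closedBall (0 : E2) 1

lemma norm_le_one (z : ↥Disk) : ‖(z : E2)‖ ≤ 1 :=
  mem_closedBall_zero_iff.mp z.2

lemma aux1 (t : unitInterval) (x : ↥Disk) (h : ‖(x : E2)‖ ≤ (t : ℝ)) :
    (t : ℝ)⁻¹ • (x : E2) ∈ Disk := by
  rw [mem_closedBall_zero_iff, norm_smul, norm_inv, Real.norm_of_nonneg t.2.1]
  rcases eq_or_lt_of_le t.2.1 with h0 | h0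
  · have hx : ‖(x : E2)‖ = 0 := le_antisymm (h.trans h0.symm.le) (norm_nonneg _)
    simp [hx]
  · rw [inv_mul_le_iff₀ h0, mul_one]; exact h

lemma aux2 (t : unitInterval) (z : ↥Disk) : (t : ℝ) • (z : E2) ∈ Disk := by
  rw [mem_closedBall_zero_iff, norm_smul, Real.norm_of_nonneg t.2.1]
  nlinarith [t.2.1, t.2.2, norm_nonneg (z : E2), norm_le_one z]

noncomputable def alexA (G : ↥Disk ≃ₜ ↥Disk) (t : unitInterval) (x : ↥Disk) : ↥Disk :=
  if h : ‖(x : E2)‖ ≤ (t : ℝ) then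
    ⟨(t : ℝ) • ((G ⟨(t : ℝ)⁻¹ • (x : E2), aux1 t x h⟩ : ↥Disk) : E2), aux2 t _⟩
  else x

open Classical in
noncomputable def Gext (G : ↥Disk ≃ₜ ↥Disk) (y : E2) : E2 :=
  if h : y ∈ Disk then ((G ⟨y, h⟩ : ↥Disk) : E2) else y

lemma Gext_of_mem (G : ↥Disk ≃ₜ ↥Disk) {y : E2} (h : y ∈ Disk) :
    Gext G y = ((G ⟨y, h⟩ : ↥Disk) : E2) := dif_pos h

lemma Gext_coe (G : ↥Disk ≃ₜ ↥Disk) (z : ↥Disk) :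
    Gext G (z : E2) = ((G z : ↥Disk) : E2) := Gext_of_mem G z.2

lemma Gext_mem (G : ↥Disk ≃ₜ ↥Disk) {y : E2} (h : y ∈ Disk) : Gext G y ∈ Disk := by
  rw [Gext_of_mem G h]; exact (G ⟨y, h⟩).2

lemma alexA_coe (G : ↥Disk ≃ₜ ↥Disk) (t : unitInterval) (x : ↥Disk) :
    ((alexA G t x : ↥Disk) : E2) =
      if ‖(x : E2)‖ ≤ (t : ℝ) then (t : ℝ) • Gext G ((t : ℝ)⁻¹ • (x : E2)) else (x : E2) := by
  by_cases h : ‖(x : E2)‖ ≤ (t : ℝ)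
  · rw [alexA, dif_pos h, if_pos h, Gext_of_mem G (aux1 t x h)]
  · rw [alexA, dif_neg h, if_neg h]

lemma continuousOn_Gext (G : ↥Disk ≃ₜ ↥Disk) : ContinuousOn (Gext G) Disk := by
  rw [continuousOn_iff_continuous_restrict]
  have : Disk.domRestrict (Gext G) = fun x : ↥Disk => ((G x : ↥Disk) : E2) := by
    funext x
    exact Gext_coe G x
  rw [this]
  exact continuous_subtype_val.comp G.continuous

lemma alexA_left_inv (G : ↥Disk ≃ₜ ↥Disk) (t : unitInterval) (x : ↥Disk) :
    alexA G.symm t (alexA G t x) = x := by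
  apply Subtype.ext
  rw [alexA_coe]
  by_cases h : ‖(x : E2)‖ ≤ (t : ℝ)
  · have hcoe : ((alexA G t x : ↥Disk) : E2) = (t : ℝ) • Gext G ((t : ℝ)⁻¹ • (x : E2)) := by
      rw [alexA_coe, if_pos h]
    rcases eq_or_lt_of_le t.2.1 with h0 | h0
    · -- t = 0
      have h0' : (t : ℝ) = 0 := h0.symm
      have hx : (x : E2) = 0 := by
        rw [← norm_le_zero_iff]; exact h.trans h0'.le
      have hA : ((alexA G t x : ↥Disk) : E2) = 0 := by rw [hcoe, h0', zero_smul]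
      rw [if_pos (by rw [hA, norm_zero]; exact t.2.1), hA, h0', zero_smul, hx]
    · have ht : (t : ℝ) ≠ 0 := ne_of_gt h0
      have hmem : (t : ℝ)⁻¹ • (x : E2) ∈ Disk := aux1 t x h
      have hle : ‖((alexA G t x : ↥Disk) : E2)‖ ≤ (t : ℝ) := by
        rw [hcoe, norm_smul, Real.norm_of_nonneg t.2.1]
        have h1 : ‖Gext G ((t : ℝ)⁻¹ • (x : E2))‖ ≤ 1 := by
          have := Gext_mem G hmem
          rwa [mem_closedBall_zero_iff] at this
        nlinarith [t.2.1]
      rw [if_pos hle, hcoe, inv_smul_smul₀ ht, Gext_of_mem G hmem,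
        Gext_coe G.symm, Homeomorph.symm_apply_apply, smul_inv_smul₀ ht]
  · have hcoe : ((alexA G t x : ↥Disk) : E2) = (x : E2) := by rw [alexA_coe, if_neg h]
    rw [hcoe, if_neg h]

lemma alexA_boundary (G : ↥Disk ≃ₜ ↥Disk)
    (hG : ∀ y : ↥Disk, ‖(y : E2)‖ = 1 → G y = y)
    (t : unitInterval) (y : ↥Disk) (hy : ‖(y : E2)‖ = 1) : alexA G t y = y := by
  apply Subtype.ext
  rw [alexA_coe]
  by_cases h : ‖(y : E2)‖ ≤ (t : ℝ)
  · have ht : (t : ℝ) = 1 := le_antisymm t.2.2 (by rw [← hy]; exact h)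
    rw [if_pos h, ht]
    simp only [inv_one, one_smul]
    have : Gext G (y : E2) = ((G y : ↥Disk) : E2) := Gext_coe G y
    rw [this, hG y hy]
  · rw [if_neg h]

lemma alexA_zero (G : ↥Disk ≃ₜ ↥Disk) (x : ↥Disk) : alexA G 0 x = x := by
  apply Subtype.ext
  rw [alexA_coe]
  by_cases h : ‖(x : E2)‖ ≤ ((0 : unitInterval) : ℝ)
  · have hx : (x : E2) = 0 := by rw [← norm_le_zero_iff]; simpa using h
    rw [if_pos h]
    simp [hx]
  · rw [if_neg h]

lemma alexA_one (G : ↥Disk ≃ₜ ↥Disk) (x : ↥Disk) : alexA G 1 x = G x := by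
  apply Subtype.ext
  rw [alexA_coe]
  have h : ‖(x : E2)‖ ≤ ((1 : unitInterval) : ℝ) := by simpa using norm_le_one x
  rw [if_pos h]
  simp only [Set.Icc.coe_one, inv_one, one_smul]
  exact Gext_coe G x

lemma alexA_dist (G : ↥Disk ≃ₜ ↥Disk) (t : unitInterval) (x : ↥Disk) :
    ‖((alexA G t x : ↥Disk) : E2) - (x : E2)‖ ≤ 2 * (t : ℝ) := by
  rw [alexA_coe]
  by_cases h : ‖(x : E2)‖ ≤ (t : ℝ)
  · rw [if_pos h]
    have h1 : ‖Gext G ((t : ℝ)⁻¹ • (x : E2))‖ ≤ 1 := by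
      have := Gext_mem G (aux1 t x h)
      rwa [mem_closedBall_zero_iff] at this
    have h2 : ‖(t : ℝ) • Gext G ((t : ℝ)⁻¹ • (x : E2)) - (x : E2)‖ ≤
        ‖(t : ℝ) • Gext G ((t : ℝ)⁻¹ • (x : E2))‖ + ‖(x : E2)‖ := norm_sub_le _ _
    have h3 : ‖(t : ℝ) • Gext G ((t : ℝ)⁻¹ • (x : E2))‖ ≤ (t : ℝ) := by
      rw [norm_smul, Real.norm_of_nonneg t.2.1]
      nlinarith [t.2.1]
    linarith
  · rw [if_neg h]
    simp only [sub_self, norm_zero]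
    nlinarith [t.2.1]

lemma alexA_continuous (G : ↥Disk ≃ₜ ↥Disk)
    (hG : ∀ y : ↥Disk, ‖(y : E2)‖ = 1 → G y = y) :
    Continuous (fun p : ↥Disk × unitInterval => alexA G p.2 p.1) := by
  have key : Continuous (fun p : ↥Disk × unitInterval => ((alexA G p.2 p.1 : ↥Disk) : E2)) := by
    rw [continuous_iff_continuousAt]
    rintro ⟨x₀, t₀⟩
    rcases eq_or_lt_of_le t₀.2.1 with h0 | h0
    · -- t₀ = 0
      have hF0 : ((alexA G t₀ x₀ : ↥Disk) : E2) = (x₀ : E2) := by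
        have ht0 : t₀ = 0 := Subtype.ext h0.symm
        rw [ht0, alexA_zero]
      have htend : Tendsto (fun p : ↥Disk × unitInterval => ((alexA G p.2 p.1 : ↥Disk) : E2))
          (𝓝 (x₀, t₀)) (𝓝 (x₀ : E2)) := by
        rw [← tendsto_sub_nhds_zero_iff]
        apply squeeze_zero_norm
          (a := fun p : ↥Disk × unitInterval => ‖((p.1 : E2)) - (x₀ : E2)‖ + 2 * (p.2 : ℝ))
        · intro p
          have h1 := alexA_dist G p.2 p.1
          have h2 := norm_sub_le_norm_sub_add_norm_sub
            ((alexA G p.2 p.1 : ↥Disk) : E2) ((p.1 : E2)) ((x₀ : E2))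
          linarith
        · have hc : Continuous (fun p : ↥Disk × unitInterval =>
              ‖((p.1 : E2)) - (x₀ : E2)‖ + 2 * (p.2 : ℝ)) := by fun_prop
          have h4 := hc.continuousAt (x := (x₀, t₀))
          rw [ContinuousAt] at h4
          simpa [← h0] using h4
      rw [ContinuousAt]
      simpa [hF0] using htend
    · -- 0 < t₀
      set s : Set (↥Disk × unitInterval) := {p | 0 < (p.2 : ℝ)} with hs
      have hso : IsOpen s := isOpen_lt continuous_const (continuous_subtype_val.comp continuous_snd)
      have hmem : s ∈ 𝓝 (x₀, t₀) := hso.mem_nhds h0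
      apply ContinuousOn.continuousAt _ hmem
      have heq : EqOn (fun p : ↥Disk × unitInterval => ((alexA G p.2 p.1 : ↥Disk) : E2))
          (fun p : ↥Disk × unitInterval =>
            if ‖(p.1 : E2)‖ ≤ (p.2 : ℝ) then (p.2 : ℝ) • Gext G ((p.2 : ℝ)⁻¹ • (p.1 : E2))
            else (p.1 : E2)) s := fun p _ => alexA_coe G p.2 p.1
      apply ContinuousOn.congr _ heq
      have hnormcont : Continuous (fun p : ↥Disk × unitInterval => ‖(p.1 : E2)‖) := by fun_prop
      have htcont : Continuous (fun p : ↥Disk × unitInterval => (p.2 : ℝ)) := by fun_prop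
      have hClosed : IsClosed {p : ↥Disk × unitInterval | ‖(p.1 : E2)‖ ≤ (p.2 : ℝ)} :=
        isClosed_le hnormcont htcont
      apply ContinuousOn.if
      · -- frontier condition
        rintro p ⟨hps, hpf⟩
        have h1 : ‖(p.1 : E2)‖ = (p.2 : ℝ) := frontier_le_subset_eq hnormcont htcont hpf
        have hps' : (0 : ℝ) < (p.2 : ℝ) := hps
        have ht : (p.2 : ℝ) ≠ 0 := ne_of_gt hps'
        have hnorm1 : ‖(p.2 : ℝ)⁻¹ • (p.1 : E2)‖ = 1 := by
          rw [norm_smul, norm_inv, Real.norm_of_nonneg p.2.2.1, h1]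
          field_simp
        have harg : (p.2 : ℝ)⁻¹ • (p.1 : E2) ∈ Disk := by
          rw [mem_closedBall_zero_iff, hnorm1]
        show (p.2 : ℝ) • Gext G ((p.2 : ℝ)⁻¹ • (p.1 : E2)) = (p.1 : E2)
        rw [Gext_of_mem G harg, hG ⟨_, harg⟩ hnorm1]
        exact smul_inv_smul₀ ht _
      · -- continuity of the scaled branch
        rw [hClosed.closure_eq]
        apply ContinuousOn.smul htcont.continuousOn
        apply (continuousOn_Gext G).comp
        · apply ContinuousOn.fun_smul
          · apply ContinuousOn.inv₀ htcont.continuousOn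
            rintro p ⟨hps, _⟩
            exact ne_of_gt hps
          · exact (continuous_subtype_val.comp continuous_fst).continuousOn
        · rintro p ⟨hps, hple⟩
          have hps' : (0 : ℝ) < (p.2 : ℝ) := hps
          have hple' : ‖(p.1 : E2)‖ ≤ (p.2 : ℝ) := hple
          show (p.2 : ℝ)⁻¹ • (p.1 : E2) ∈ Disk
          rw [mem_closedBall_zero_iff, norm_smul, norm_inv, Real.norm_of_nonneg p.2.2.1]
          rw [inv_mul_le_iff₀ hps', mul_one]
          exact hple'
      · exact (continuous_subtype_val.comp continuous_fst).continuousOn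
  exact Continuous.subtype_mk key fun p => (alexA G p.2 p.1).2

noncomputable def alexHomeo (G : ↥Disk ≃ₜ ↥Disk)
    (hG : ∀ y : ↥Disk, ‖(y : E2)‖ = 1 → G y = y) (t : unitInterval) : ↥Disk ≃ₜ ↥Disk where
  toFun := alexA G t
  invFun := alexA G.symm t
  left_inv := alexA_left_inv G t
  right_inv := fun x => by
    have := alexA_left_inv G.symm t x
    rwa [Homeomorph.symm_symm] at this
  continuous_toFun := by
    have := (alexA_continuous G hG).comp
      (Continuous.prodMk continuous_id (continuous_const (y := t)))
    exact this
  continuous_invFun := by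
    have hG' : ∀ y : ↥Disk, ‖(y : E2)‖ = 1 → G.symm y = y := by
      intro y hy
      conv_lhs => rw [← hG y hy]
      exact G.symm_apply_apply y
    have := (alexA_continuous G.symm hG').comp
      (Continuous.prodMk continuous_id (continuous_const (y := t)))
    exact this

end AlexTrick

/-- **Alexander trick.** Every homeomorphism `G : D² → D²` of the closed unit disk which
restricts to the identity on `∂D²` is isotopic to the identity through homeomorphisms fixing
`∂D²` pointwise: there is a continuous family of homeomorphisms `H t : D² → D²`, `t ∈ [0,1]`,
each equal to the identity on `∂D²`, with `H 0 = id` and `H 1 = G`.  (Explicitly one may take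
`H t x = t • G (x/t)` for `|x| < t` and `H t x = x` for `|x| ≥ t`.) -/
theorem alexander_trick
    (G : (Metric.closedBall (0 : EuclideanSpace ℝ (Fin 2)) 1) ≃ₜ
      (Metric.closedBall (0 : EuclideanSpace ℝ (Fin 2)) 1))
    (hG : ∀ y : Metric.closedBall (0 : EuclideanSpace ℝ (Fin 2)) 1,
      ‖(y : EuclideanSpace ℝ (Fin 2))‖ = 1 → G y = y) :
    ∃ H : unitInterval → Metric.closedBall (0 : EuclideanSpace ℝ (Fin 2)) 1 →
        Metric.closedBall (0 : EuclideanSpace ℝ (Fin 2)) 1,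
      Continuous (fun p : Metric.closedBall (0 : EuclideanSpace ℝ (Fin 2)) 1 × unitInterval =>
        H p.2 p.1) ∧
      (∀ t, ∃ e : (Metric.closedBall (0 : EuclideanSpace ℝ (Fin 2)) 1) ≃ₜ
        (Metric.closedBall (0 : EuclideanSpace ℝ (Fin 2)) 1), ⇑e = H t) ∧
      (∀ (t : unitInterval) (y : Metric.closedBall (0 : EuclideanSpace ℝ (Fin 2)) 1),
        ‖(y : EuclideanSpace ℝ (Fin 2))‖ = 1 → H t y = y) ∧
      H 0 = id ∧
      H 1 = ⇑G := by
  refine ⟨fun t => AlexTrick.alexA G t, AlexTrick.alexA_continuous G hG, ?_, ?_, ?_, ?_⟩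
  · exact fun t => ⟨AlexTrick.alexHomeo G hG t, rfl⟩
  · exact fun t y hy => AlexTrick.alexA_boundary G hG t y hy
  · funext x; exact AlexTrick.alexA_zero G x
  · funext x; exact AlexTrick.alexA_one G x
end
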